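/- Under the same assumptions as in the previous relation (tangent characterizations of γ₁ and γ₂ for the vertices (n_x a, n_y b) and ((n_x+1)a, n_y b), sin(γ₁ - γ₂) ≠ 0), one has s cos φ - n_x a = a · sin(φ - γ₂) cos(φ - γ₁) / sin(γ₁ - γ₂). -/

import Mathlib

open Real

/-- `s cos φ - n_x a = a · sin (φ - γ₂) cos (φ - γ₁) / sin (γ₁ - γ₂)`. -/
theorem cos_phi_nx_a (s a b φ γ₁ γ₂ : ℝ) (nx ny : ℤ)
    (hs : 0 < s) (ha : 0 < a) (hb : 0 < b)
    (hN : s * Real.sin φ - (ny : ℝ) * b ≠ 0)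
    (hD1 : s * Real.cos φ - (nx : ℝ) * a ≠ 0)
    (hD2 : s * Real.cos φ - ((nx : ℝ) + 1) * a ≠ 0)
    (hc1 : Real.cos (φ - γ₁) ≠ 0) (hc2 : Real.cos (φ - γ₂) ≠ 0)
    (hsin : Real.sin (γ₁ - γ₂) ≠ 0)
    (hγ1 : Real.tan (φ - γ₁) =
      (s * Real.sin φ - (ny : ℝ) * b) / (s * Real.cos φ - (nx : ℝ) * a))
    (hγ2 : Real.tan (φ - γ₂) =
      (s * Real.sin φ - (ny : ℝ) * b) / (s * Real.cos φ - ((nx : ℝ) + 1) * a)) :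
    s * Real.cos φ - (nx : ℝ) * a =
      a * (Real.sin (φ - γ₂) * Real.cos (φ - γ₁)) / Real.sin (γ₁ - γ₂) := by
  have hs1 : Real.sin (φ - γ₁) = Real.cos (φ - γ₁) *
      ((s * Real.sin φ - (ny : ℝ) * b) / (s * Real.cos φ - (nx : ℝ) * a)) := by
    rw [← hγ1, Real.tan_eq_sin_div_cos]; field_simp
  have hs2 : Real.sin (φ - γ₂) = Real.cos (φ - γ₂) *
      ((s * Real.sin φ - (ny : ℝ) * b) / (s * Real.cos φ - ((nx : ℝ) + 1) * a)) := by
    rw [← hγ2, Real.tan_eq_sin_div_cos]; field_simp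
  have hkey : Real.sin (γ₁ - γ₂) = Real.sin ((φ - γ₂) - (φ - γ₁)) := by ring_nf
  rw [eq_div_iff hsin, hkey, Real.sin_sub, hs1, hs2]
  have hD2' : s * Real.cos φ - a * ((nx : ℝ) + 1) ≠ 0 := by
    intro h; apply hD2; linarith
  field_simp [hD2']
  ring
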